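/- arXiv:1208.2312 — 2 statements merged into one kernel-verified Lean document; each statement's English description precedes it below -/
import Mathlib

section
/- Let X → L → Y → X[1] be a distinguished triangle in a triangulated category over a finite field with all Hom spaces finite, and let Z be any object. Applying Hom(−, Z[1]) yields an exact sequence Hom(Y,Z[1]) →^u Hom(L,Z[1]) →^v Hom(X,Z[1]), and the image of u has cardinality |Hom(Y, Z[1])| · {X ⊕ Y, Z[1]} · {L, Z[1]}^{-1}, where {A,B} = Π_{i>0} |Hom(A[i],B)|^{(-1)^i}. -/
/-!
STATEMENT 11.  For a distinguished triangle `X →f L →g Y →h X[1]` and any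
object `Z`, applying `Hom(−,Z[1])` gives an exact sequence
`Hom(Y,Z[1]) →u Hom(L,Z[1]) →v Hom(X,Z[1])` (`u = (g ≫ ·)`, `v = (f ≫ ·)`,
exactness: `range u = ker v`), and
`|Im u| = |Hom(Y,Z[1])| · {X ⊕ Y, Z[1]} · {L,Z[1]}⁻¹`.
-/

open CategoryTheory Category Limits Pretriangulated

variable {C : Type*} [Category C] [Preadditive C] [HasZeroObject C]
  [HasShift C ℤ] [∀ n : ℤ, (CategoryTheory.shiftFunctor C n).Additive] [Pretriangulated C]

/-- `Hom(A,B)_Z`: the set of morphisms `A ⟶ B` whose (mapping) cone is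
isomorphic to `Z`, i.e. which fit into a distinguished triangle
`A ⟶ B ⟶ Z ⟶ A[1]`. -/
def coneSet (A B Z : C) : Set (A ⟶ B) :=
  {f | ∃ (g : B ⟶ Z) (h : Z ⟶ A⟦(1:ℤ)⟧),
    Pretriangulated.Triangle.mk f g h ∈ Pretriangulated.distinguishedTriangles}

/-- `{A,B} := ∏_{i>0} |Hom(A[i],B)|^{(-1)^i}` (a finite product under the
homological finiteness assumption, formalized as a `finprod`). -/
noncomputable def br (A B : C) : ℚ :=
  ∏ᶠ i : ℕ, if 0 < i then (Nat.card ((A⟦(i:ℤ)⟧) ⟶ B) : ℚ) ^ ((-1:ℤ) ^ i) else 1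

/-- `|Aut X|` as a rational number. -/
noncomputable def nAut (X : C) : ℚ := Nat.card (Aut X)

/-- `|Hom(A,B)_Z|` as a rational number. -/
noncomputable def nCone (A B Z : C) : ℚ := Nat.card ↥(coneSet A B Z)

/-- An object is indecomposable iff it is nonzero and its endomorphism ring
has no nontrivial idempotents. -/
def Indec (X : C) : Prop :=
  ¬ Limits.IsZero X ∧ ∀ e : X ⟶ X, e ≫ e = e → e = 0 ∨ e = 𝟙 X

/-- Locality of the endomorphism ring of an object. -/
def LocalEnd (X : C) : Prop :=
  ∀ e : X ⟶ X, IsIso e ∨ IsIso (𝟙 X - e)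

set_option linter.unusedSectionVars false
set_option maxHeartbeats 1000000

/-! ### Auxiliary material -/

/-- Iterated rotation of a triangle. -/
def Tn (T : Triangle C) : ℕ → Triangle C
  | 0 => T
  | n+1 => (Tn T n).rotate

lemma Tn_dist (T : Triangle C) (hT : T ∈ distTriang C) (n : ℕ) : Tn T n ∈ distTriang C := by
  induction n with
  | zero => exact hT
  | succ n ih => exact rot_of_distTriang _ ih

lemma exact_iff (T : Triangle C) (hT : T ∈ distTriang C) (W : C) (s : T.obj₂ ⟶ W) :
    (∃ t : T.obj₃ ⟶ W, T.mor₂ ≫ t = s) ↔ T.mor₁ ≫ s = 0 := by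
  constructor
  · rintro ⟨t, rfl⟩
    rw [← assoc, comp_distTriang_mor_zero₁₂ T hT, zero_comp]
  · intro hs
    obtain ⟨t, ht⟩ := Triangle.yoneda_exact₂ T hT s hs
    exact ⟨t, ht.symm⟩

lemma card_eq_range_mul_ker {A B : Type*} [AddCommGroup A] [AddCommGroup B] [Finite A]
    (φ : A →+ B) : Nat.card A = Nat.card (Set.range φ) * Nat.card φ.ker := by
  rw [AddSubgroup.card_eq_card_quotient_mul_card_addSubgroup φ.ker]
  congr 1
  rw [Nat.card_congr (QuotientAddGroup.quotientKerEquivRange φ).toEquiv,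
    ← AddMonoidHom.coe_range]
  rfl

lemma card_hom_congr {P Q : C} (e : P ≅ Q) (W : C) :
    Nat.card (P ⟶ W) = Nat.card (Q ⟶ W) :=
  Nat.card_congr (Iso.homCongr e (Iso.refl W))

lemma subsingleton_hom_of_iso {P Q : C} (e : P ≅ Q) (W : C) (h : Subsingleton (Q ⟶ W)) :
    Subsingleton (P ⟶ W) :=
  ((Iso.homCongr e (Iso.refl W)).subsingleton_congr).mpr h

lemma card_hom_biprod [HasBinaryBiproducts C] (P Q W : C) :
    Nat.card ((P ⊞ Q) ⟶ W) = Nat.card (P ⟶ W) * Nat.card (Q ⟶ W) := by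
  rw [← Nat.card_prod]
  refine Nat.card_congr ⟨fun s => (biprod.inl ≫ s, biprod.inr ≫ s),
    fun p => biprod.desc p.1 p.2, fun s => ?_, fun p => ?_⟩
  · apply biprod.hom_ext' <;> simp
  · simp

lemma subsingleton_hom_biprod [HasBinaryBiproducts C] (P Q W : C)
    (h1 : Subsingleton (P ⟶ W)) (h2 : Subsingleton (Q ⟶ W)) :
    Subsingleton ((P ⊞ Q) ⟶ W) := by
  constructor
  intro a b
  apply biprod.hom_ext' <;> exact Subsingleton.elim _ _

/-- `(Tn T (n₀+3i)).obj₁ ≅ W⟦i⟧` provided `(Tn T n₀).obj₁ ≅ W`. -/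
noncomputable def TnObjIso (T : Triangle C) (n₀ : ℕ) (W : C) (e : (Tn T n₀).obj₁ ≅ W) :
    ∀ i : ℕ, (Tn T (n₀ + 3*i)).obj₁ ≅ W⟦(i:ℤ)⟧
  | 0 => e ≪≫ ((shiftFunctorZero C ℤ).symm.app W) ≪≫ eqToIso (by norm_num)
  | i+1 =>
      eqToIso (congrArg (fun m => (Tn T m).obj₁) (by ring : n₀ + 3*(i+1) = (n₀ + 3*i) + 3)) ≪≫
      (shiftFunctor C (1:ℤ)).mapIso (TnObjIso T n₀ W e i) ≪≫
      (shiftFunctorAdd' C (i:ℤ) 1 ((i+1:ℕ):ℤ) (by push_cast; ring)).symm.app W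

/-- The cardinality of the image of `Hom(−,B)` applied to `mor₁` of `Tn T n`. -/
noncomputable def Rim (T : Triangle C) (B : C) (n : ℕ) : ℕ :=
  Nat.card (Set.range (fun t : ((Tn T n).obj₂ ⟶ B) => (Tn T n).mor₁ ≫ t))

lemma Rim_key (T : Triangle C) (hT : T ∈ distTriang C) (B : C) [∀ A B' : C, Finite (A ⟶ B')]
    (n : ℕ) :
    Nat.card ((Tn T n).obj₂ ⟶ B) = Rim T B n * Rim T B (n+1) := by
  set φ : ((Tn T n).obj₂ ⟶ B) →+ ((Tn T n).obj₁ ⟶ B) :=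
    AddMonoidHom.mk' (fun s => (Tn T n).mor₁ ≫ s) (fun a b => Preadditive.comp_add _ _ _ _ _ _)
    with hφ
  have h1 : Nat.card ((Tn T n).obj₂ ⟶ B) = Nat.card (Set.range φ) * Nat.card φ.ker :=
    card_eq_range_mul_ker φ
  have h2 : Nat.card (Set.range φ) = Rim T B n := rfl
  have h3 : Nat.card φ.ker = Rim T B (n+1) := by
    have hset : (φ.ker : Set ((Tn T n).obj₂ ⟶ B)) =
        Set.range (fun t : ((Tn T (n+1)).obj₂ ⟶ B) => (Tn T (n+1)).mor₁ ≫ t) := by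
      ext s
      have hiff := exact_iff (Tn T n) (Tn_dist T hT n) B s
      simp only [AddMonoidHom.coe_ker, Set.mem_range]
      constructor
      · intro hs
        exact hiff.mpr hs
      · intro hs
        exact hiff.mp hs
    have : Nat.card (φ.ker : Set ((Tn T n).obj₂ ⟶ B)) = Rim T B (n+1) := by
      rw [hset]; rfl
    exact this
  rw [h1, h2, h3]

lemma Rim_pos (T : Triangle C) (B : C) [∀ A B' : C, Finite (A ⟶ B')] (n : ℕ) :
    0 < Rim T B n := by
  have : Nonempty ((Tn T n).obj₂ ⟶ B) := ⟨0⟩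
  have h := Set.range_nonempty (fun t : ((Tn T n).obj₂ ⟶ B) => (Tn T n).mor₁ ≫ t)
  have := h.to_subtype
  exact Nat.card_pos

lemma Rim_eq_one (T : Triangle C) (B : C) [∀ A B' : C, Finite (A ⟶ B')] (n : ℕ)
    (h : Subsingleton ((Tn T n).obj₁ ⟶ B)) : Rim T B n = 1 := by
  have : Nonempty ((Tn T n).obj₂ ⟶ B) := ⟨0⟩
  have h1 := Set.range_nonempty (fun t : ((Tn T n).obj₂ ⟶ B) => (Tn T n).mor₁ ≫ t)
  exact Nat.card_eq_one_iff_unique.mpr ⟨inferInstance, h1.to_subtype⟩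

lemma Rim_tele (T : Triangle C) (hT : T ∈ distTriang C) (B : C) [∀ A B' : C, Finite (A ⟶ B')]
    (j : ℕ) :
    (Rim T B 1 : ℚ) =
      (∏ k ∈ Finset.Ico 2 (j+2), (Nat.card ((Tn T k).obj₁ ⟶ B) : ℚ) ^ ((-1:ℤ)^k)) *
        (Rim T B (j+1) : ℚ) ^ ((-1:ℤ)^j) := by
  induction j with
  | zero => simp
  | succ j ih =>
    rw [ih, show j+1+2 = (j+2)+1 from rfl, Finset.prod_Ico_succ_top (by omega : 2 ≤ j+2)]
    have hkey := Rim_key T hT B (j+1)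
    have hc : (Nat.card ((Tn T (j+2)).obj₁ ⟶ B) : ℚ) =
        (Rim T B (j+1) : ℚ) * (Rim T B (j+2) : ℚ) := by exact_mod_cast congrArg Nat.cast hkey
    have hne : (Rim T B (j+2) : ℚ) ≠ 0 := by
      exact_mod_cast (Rim_pos T B (j+2)).ne'
    have hr : (Rim T B (j+1) : ℚ) =
        (Nat.card ((Tn T (j+2)).obj₁ ⟶ B) : ℚ) * ((Rim T B (j+2) : ℚ))⁻¹ := by
      rw [hc]; field_simp
    rw [mul_assoc]
    congr 1
    have e2 : ((-1:ℤ)^(j+2)) = (-1)^j := by ring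
    have e1 : ((-1:ℤ)^(j+1)) = -((-1)^j) := by ring
    rw [hr, mul_zpow, inv_zpow, e1, e2, zpow_neg]

lemma les_main (T : Triangle C) (hT : T ∈ distTriang C) (B : C) [∀ A B' : C, Finite (A ⟶ B')]
    (M : ℕ) (hM : ∀ n, 3*M+1 ≤ n → Subsingleton ((Tn T n).obj₁ ⟶ B)) :
    (Rim T B 1 : ℚ) =
      ∏ k ∈ Finset.Ico 2 (3*M+2), (Nat.card ((Tn T k).obj₁ ⟶ B) : ℚ) ^ ((-1:ℤ)^k) := by
  have ht := Rim_tele T hT B (3*M)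
  rw [Rim_eq_one T B (3*M+1) (hM (3*M+1) le_rfl)] at ht
  simpa using ht

lemma prod_range_three {β : Type*} [CommMonoid β] (F : ℕ → β) (M : ℕ) :
    ∏ j ∈ Finset.range (3*M), F j =
      ∏ i ∈ Finset.range M, (F (3*i) * F (3*i+1) * F (3*i+2)) := by
  induction M with
  | zero => simp
  | succ m ih =>
    rw [Finset.prod_range_succ, ← ih, show 3*(m+1) = 3*m+1+1+1 by ring,
      Finset.prod_range_succ, Finset.prod_range_succ, Finset.prod_range_succ]
    ac_rfl

lemma neg_one_pow_mod2 (a b : ℕ) (h : a % 2 = b % 2) : (-1:ℤ)^a = (-1:ℤ)^b := by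
  conv_lhs => rw [← Nat.div_add_mod a 2]
  conv_rhs => rw [← Nat.div_add_mod b 2]
  rw [pow_add, pow_add, pow_mul, pow_mul, h]
  norm_num

lemma br_eq_prod (W B : C) [∀ A B' : C, Finite (A ⟶ B')] (M : ℕ)
    (hsub : ∀ i : ℕ, M ≤ i → Subsingleton ((W⟦(i:ℤ)⟧) ⟶ B)) :
    br W B =
      ∏ i ∈ Finset.range M, (Nat.card ((W⟦((1+i:ℕ):ℤ)⟧) ⟶ B) : ℚ) ^ ((-1:ℤ)^(1+i)) := by
  rw [br, finprod_eq_prod_of_mulSupport_subset _ (s := Finset.Ico 1 (M+1)) ?_]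
  · rw [Finset.prod_Ico_eq_prod_range]
    simp only [Nat.add_sub_cancel]
    refine Finset.prod_congr rfl fun i _ => ?_
    rw [if_pos (by omega)]
  · intro x hx
    rw [Function.mem_mulSupport] at hx
    simp only [Finset.coe_Ico, Set.mem_Ico]
    constructor
    · by_contra h0
      exact hx (by rw [if_neg (by omega)])
    · by_contra h2
      push_neg at h2
      apply hx
      have h1 : Nat.card ((W⟦(x:ℤ)⟧) ⟶ B) = 1 :=
        Nat.card_eq_one_iff_unique.mpr ⟨hsub x (by omega), ⟨0⟩⟩
      rw [if_pos (by omega), h1]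
      simp

instance (n : ℤ) : PreservesBinaryBiproducts (shiftFunctor C n) :=
  preservesBinaryBiproducts_of_preservesBiproducts _

lemma count_aux [HasBinaryBiproducts C] [∀ A B' : C, Finite (A ⟶ B')]
    (T : Triangle C) (hT : T ∈ distTriang C) (B : C) (N₁ N₂ N₃ : ℕ)
    (hN₁ : ∀ i : ℕ, N₁ ≤ i → Subsingleton ((T.obj₁⟦(i:ℤ)⟧) ⟶ B))
    (hN₂ : ∀ i : ℕ, N₂ ≤ i → Subsingleton ((T.obj₂⟦(i:ℤ)⟧) ⟶ B))
    (hN₃ : ∀ i : ℕ, N₃ ≤ i → Subsingleton ((T.obj₃⟦(i:ℤ)⟧) ⟶ B)) :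
    (Nat.card ↥(Set.range fun t : T.obj₃ ⟶ B => T.mor₂ ≫ t) : ℚ) =
      (Nat.card (T.obj₃ ⟶ B) : ℚ) * br (T.obj₁ ⊞ T.obj₃) B * (br T.obj₂ B)⁻¹ := by
  have eX : ∀ i, (Tn T (0 + 3*i)).obj₁ ≅ T.obj₁⟦(i:ℤ)⟧ := TnObjIso T 0 T.obj₁ (Iso.refl _)
  have eL : ∀ i, (Tn T (1 + 3*i)).obj₁ ≅ T.obj₂⟦(i:ℤ)⟧ := TnObjIso T 1 T.obj₂ (Iso.refl _)
  have eY : ∀ i, (Tn T (2 + 3*i)).obj₁ ≅ T.obj₃⟦(i:ℤ)⟧ := TnObjIso T 2 T.obj₃ (Iso.refl _)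
  have hM : ∀ n, 3*(N₁+N₂+N₃+1)+1 ≤ n → Subsingleton ((Tn T n).obj₁ ⟶ B) := by
    intro n hn
    obtain ⟨i, rfl | rfl | rfl⟩ : ∃ i, n = 0 + 3*i ∨ n = 1 + 3*i ∨ n = 2 + 3*i :=
      ⟨n/3, by omega⟩
    · exact subsingleton_hom_of_iso (eX i) B (hN₁ i (by omega))
    · exact subsingleton_hom_of_iso (eL i) B (hN₂ i (by omega))
    · exact subsingleton_hom_of_iso (eY i) B (hN₃ i (by omega))
  have hles := les_main T hT B (N₁+N₂+N₃+1) hM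
  show (Rim T B 1 : ℚ) = _
  rw [hles]
  rw [Finset.prod_Ico_eq_prod_range]
  rw [show 3*(N₁+N₂+N₃+1)+2-2 = 3*(N₁+N₂+N₃+1) by omega]
  rw [prod_range_three (fun j => (Nat.card ((Tn T (2+j)).obj₁ ⟶ B) : ℚ) ^ ((-1:ℤ)^(2+j)))
    (N₁+N₂+N₃+1)]
  have hterm : ∀ i ∈ Finset.range (N₁+N₂+N₃+1),
      ((Nat.card ((Tn T (2+3*i)).obj₁ ⟶ B) : ℚ) ^ ((-1:ℤ)^(2+3*i)) *
        (Nat.card ((Tn T (2+(3*i+1))).obj₁ ⟶ B) : ℚ) ^ ((-1:ℤ)^(2+(3*i+1))) *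
        (Nat.card ((Tn T (2+(3*i+2))).obj₁ ⟶ B) : ℚ) ^ ((-1:ℤ)^(2+(3*i+2)))) =
      ((Nat.card ((T.obj₃⟦(i:ℤ)⟧) ⟶ B) : ℚ) ^ ((-1:ℤ)^i) *
        (Nat.card ((T.obj₁⟦((1+i:ℕ):ℤ)⟧) ⟶ B) : ℚ) ^ ((-1:ℤ)^(1+i)) *
        ((Nat.card ((T.obj₂⟦((1+i:ℕ):ℤ)⟧) ⟶ B) : ℚ) ^ ((-1:ℤ)^(1+i)))⁻¹) := by
    intro i _
    have c1 : Nat.card ((Tn T (2+3*i)).obj₁ ⟶ B) = Nat.card ((T.obj₃⟦(i:ℤ)⟧) ⟶ B) :=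
      card_hom_congr (eY i) B
    have c2 : Nat.card ((Tn T (2+(3*i+1))).obj₁ ⟶ B)
        = Nat.card ((T.obj₁⟦((1+i:ℕ):ℤ)⟧) ⟶ B) := by
      rw [show 2+(3*i+1) = 0+3*(1+i) by ring]
      exact card_hom_congr (eX (1+i)) B
    have c3 : Nat.card ((Tn T (2+(3*i+2))).obj₁ ⟶ B)
        = Nat.card ((T.obj₂⟦((1+i:ℕ):ℤ)⟧) ⟶ B) := by
      rw [show 2+(3*i+2) = 1+3*(1+i) by ring]
      exact card_hom_congr (eL (1+i)) B
    have s1 : ((-1:ℤ)^(2+3*i)) = (-1:ℤ)^i := neg_one_pow_mod2 _ _ (by omega)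
    have s2 : ((-1:ℤ)^(2+(3*i+1))) = (-1:ℤ)^(1+i) := neg_one_pow_mod2 _ _ (by omega)
    have s3 : ((-1:ℤ)^(2+(3*i+2))) = -((-1:ℤ)^(1+i)) := by
      rw [neg_one_pow_mod2 (2+(3*i+2)) (1+(1+i)) (by omega), pow_add]
      ring
    rw [c1, c2, c3, s1, s2, s3, zpow_neg]
  rw [Finset.prod_congr rfl hterm, Finset.prod_mul_distrib, Finset.prod_mul_distrib,
    Finset.prod_inv_distrib]
  -- now handle the three factors
  have hM1 : (Nat.card ((T.obj₃⟦((N₁+N₂+N₃+1:ℕ):ℤ)⟧) ⟶ B) : ℚ) = 1 := by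
    have := Nat.card_eq_one_iff_unique.mpr
      ⟨hN₃ (N₁+N₂+N₃+1) (by omega), (⟨0⟩ : Nonempty ((T.obj₃⟦((N₁+N₂+N₃+1:ℕ):ℤ)⟧) ⟶ B))⟩
    exact_mod_cast congrArg Nat.cast this
  have hc0 : (∏ i ∈ Finset.range (N₁+N₂+N₃+1),
        (Nat.card ((T.obj₃⟦(i:ℤ)⟧) ⟶ B) : ℚ) ^ ((-1:ℤ)^i))
      = (Nat.card (T.obj₃ ⟶ B) : ℚ) * ∏ i ∈ Finset.range (N₁+N₂+N₃+1),
        (Nat.card ((T.obj₃⟦((1+i:ℕ):ℤ)⟧) ⟶ B) : ℚ) ^ ((-1:ℤ)^(1+i)) := by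
    have h1 := Finset.prod_range_succ
      (fun i : ℕ => (Nat.card ((T.obj₃⟦(i:ℤ)⟧) ⟶ B) : ℚ) ^ ((-1:ℤ)^i)) (N₁+N₂+N₃+1)
    have h2 := Finset.prod_range_succ'
      (fun i : ℕ => (Nat.card ((T.obj₃⟦(i:ℤ)⟧) ⟶ B) : ℚ) ^ ((-1:ℤ)^i)) (N₁+N₂+N₃+1)
    rw [hM1, one_zpow, mul_one] at h1
    rw [← h1, h2]
    have hf0 : (Nat.card ((T.obj₃⟦((0:ℕ):ℤ)⟧) ⟶ B) : ℚ) ^ ((-1:ℤ)^0)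
        = (Nat.card (T.obj₃ ⟶ B) : ℚ) := by
      rw [pow_zero, zpow_one, Nat.cast_zero]
      exact_mod_cast congrArg Nat.cast (card_hom_congr ((shiftFunctorZero C ℤ).app T.obj₃) B)
    rw [hf0, mul_comm]
    congr 1
    refine Finset.prod_congr rfl fun i _ => ?_
    rw [Nat.add_comm i 1]
  rw [hc0]
  have hbrL : br T.obj₂ B = ∏ i ∈ Finset.range (N₁+N₂+N₃+1),
      (Nat.card ((T.obj₂⟦((1+i:ℕ):ℤ)⟧) ⟶ B) : ℚ) ^ ((-1:ℤ)^(1+i)) :=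
    br_eq_prod T.obj₂ B (N₁+N₂+N₃+1) (fun i hi => hN₂ i (by omega))
  have hbrXY : br (T.obj₁ ⊞ T.obj₃) B =
      (∏ i ∈ Finset.range (N₁+N₂+N₃+1),
        (Nat.card ((T.obj₁⟦((1+i:ℕ):ℤ)⟧) ⟶ B) : ℚ) ^ ((-1:ℤ)^(1+i))) *
      (∏ i ∈ Finset.range (N₁+N₂+N₃+1),
        (Nat.card ((T.obj₃⟦((1+i:ℕ):ℤ)⟧) ⟶ B) : ℚ) ^ ((-1:ℤ)^(1+i))) := by
    rw [br_eq_prod (T.obj₁ ⊞ T.obj₃) B (N₁+N₂+N₃+1) ?_]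
    · rw [← Finset.prod_mul_distrib]
      refine Finset.prod_congr rfl fun i _ => ?_
      have hc : Nat.card (((T.obj₁ ⊞ T.obj₃)⟦((1+i:ℕ):ℤ)⟧) ⟶ B)
          = Nat.card ((T.obj₁⟦((1+i:ℕ):ℤ)⟧) ⟶ B) * Nat.card ((T.obj₃⟦((1+i:ℕ):ℤ)⟧) ⟶ B) := by
        rw [card_hom_congr ((shiftFunctor C ((1+i:ℕ):ℤ)).mapBiprod T.obj₁ T.obj₃) B]
        exact card_hom_biprod _ _ B
      rw [hc, Nat.cast_mul, mul_zpow]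
    · intro i hi
      exact subsingleton_hom_of_iso ((shiftFunctor C (i:ℤ)).mapBiprod T.obj₁ T.obj₃) B
        (subsingleton_hom_biprod _ _ _ (hN₁ i (by omega)) (hN₃ i (by omega)))
  rw [hbrXY, hbrL]
  ring

theorem stmt11 [HasBinaryBiproducts C] (k : Type*) [Field k] [Finite k] [Linear k C]
    [∀ A B : C, Finite (A ⟶ B)]
    (hhom : ∀ A B : C, ∃ N : ℕ, ∀ i : ℕ, N ≤ i → Subsingleton ((A⟦(i:ℤ)⟧) ⟶ B))
    (X L Y Z : C)
    (f : X ⟶ L) (g : L ⟶ Y) (h : Y ⟶ X⟦(1:ℤ)⟧)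
    (hdist : Pretriangulated.Triangle.mk f g h ∈ Pretriangulated.distinguishedTriangles) :
    (∀ s : L ⟶ Z⟦(1:ℤ)⟧, (∃ t : Y ⟶ Z⟦(1:ℤ)⟧, g ≫ t = s) ↔ f ≫ s = 0) ∧
    (Nat.card ↥(Set.range fun t : Y ⟶ Z⟦(1:ℤ)⟧ => g ≫ t) : ℚ) =
      (Nat.card (Y ⟶ Z⟦(1:ℤ)⟧) : ℚ) * br (X ⊞ Y) (Z⟦(1:ℤ)⟧) * (br L (Z⟦(1:ℤ)⟧))⁻¹ := by
  obtain ⟨N₁, hN₁⟩ := hhom X (Z⟦(1:ℤ)⟧)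
  obtain ⟨N₂, hN₂⟩ := hhom L (Z⟦(1:ℤ)⟧)
  obtain ⟨N₃, hN₃⟩ := hhom Y (Z⟦(1:ℤ)⟧)
  exact ⟨fun s => exact_iff (Triangle.mk f g h) hdist (Z⟦(1:ℤ)⟧) s,
    count_aux (Triangle.mk f g h) hdist (Z⟦(1:ℤ)⟧) N₁ N₂ N₃ hN₁ hN₂ hN₃⟩
end

section
/- Let X ≅ n₁X₁ ⊕ ⋯ ⊕ n_tX_t be an object in a Krull-Schmidt k-linear category over a finite field k, with the X_i pairwise nonisomorphic indecomposables. Then |Aut X| = q^{Σ_{i≠j} dim_k Hom(n_iX_i, n_jX_j)} · Π_{i=1}^t |Aut(n_iX_i)|, where q = |k|. -/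
/-!
STATEMENT 14.  Let `X ≅ n₁X₁ ⊕ ⋯ ⊕ n_tX_t` in a Krull-Schmidt `k`-linear
category over a finite field `k` with `q` elements, with the `X i` pairwise
nonisomorphic indecomposables (with local endomorphism rings).  Then
`|Aut X| = q^{Σ_{i≠j} dim_k Hom(n_iX_i, n_jX_j)} · ∏_i |Aut(n_iX_i)|`.
-/

open CategoryTheory Category Limits

variable {C : Type*} [Category C] [Preadditive C] [HasFiniteBiproducts C]

set_option linter.unusedSectionVars false
set_option linter.unusedVariables false
set_option maxHeartbeats 1000000

attribute [local instance] CategoryTheory.Limits.hasBinaryBiproducts_of_finite_biproducts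

/-! ### Ring-theoretic radical lemmas -/

section RingRad
variable {R : Type*} [Ring R]

/-- Jacobson-radical-like predicate. -/
def RRad (a : R) : Prop := ∀ b : R, IsUnit (1 - b * a)

lemma runit_swap {a b : R} (h : IsUnit (1 - a * b)) : IsUnit (1 - b * a) := by
  obtain ⟨u, hu⟩ := h
  set i : R := ↑u⁻¹ with hi
  have hi1 : (1 - a * b) * i = 1 := by rw [← hu]; exact u.mul_inv
  have hi2 : i * (1 - a * b) = 1 := by rw [← hu]; exact u.inv_mul
  have h1 : a * b * i = i - 1 := by
    have h' : i - a * b * i = 1 := by rw [sub_mul, one_mul] at hi1; exact hi1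
    rw [← h']; abel
  have h2 : i * (a * b) = i - 1 := by
    have h' : i - i * (a * b) = 1 := by rw [mul_sub, mul_one] at hi2; exact hi2
    rw [← h']; abel
  refine ⟨⟨1 - b * a, 1 + b * i * a, ?_, ?_⟩, rfl⟩
  · calc (1 - b * a) * (1 + b * i * a)
        = 1 + b * i * a - b * a - b * (a * b * i) * a := by noncomm_ring
      _ = 1 + b * i * a - b * a - b * (i - 1) * a := by rw [h1]
      _ = 1 := by noncomm_ring
  · calc (1 + b * i * a) * (1 - b * a)
        = 1 + b * i * a - b * a - b * (i * (a * b)) * a := by noncomm_ring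
      _ = 1 + b * i * a - b * a - b * (i - 1) * a := by rw [h2]
      _ = 1 := by noncomm_ring

lemma rrad_zero : RRad (0 : R) := fun b => by simp

lemma rrad_unit {a : R} (h : RRad a) : IsUnit (1 - a) := by simpa using h 1

lemma rrad_add {a a' : R} (h : RRad a) (h' : RRad a') : RRad (a + a') := by
  intro b
  obtain ⟨u, hu⟩ := h b
  set i : R := ↑u⁻¹ with hi
  have hui : (1 - b * a) * i = 1 := by rw [← hu]; exact u.mul_inv
  have key' : (1 - b * a) * (1 - i * (b * a')) = 1 - b * (a + a') :=
    calc (1 - b * a) * (1 - i * (b * a'))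
        = (1 - b * a) - ((1 - b * a) * i) * (b * a') := by noncomm_ring
      _ = (1 - b * a) - 1 * (b * a') := by rw [hui]
      _ = 1 - b * (a + a') := by noncomm_ring
  rw [← key']
  refine (h b).mul ?_
  rw [show i * (b * a') = (i * b) * a' by rw [mul_assoc]]
  exact h' (i * b)

lemma rrad_sum {ι : Type*} (s : Finset ι) (g : ι → R) (h : ∀ i ∈ s, RRad (g i)) :
    RRad (∑ i ∈ s, g i) := by
  classical
  induction s using Finset.induction_on with
  | empty => simpa using rrad_zero
  | @insert a s hx ih =>
    rw [Finset.sum_insert hx]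
    exact rrad_add (h _ (Finset.mem_insert_self _ _))
      (ih fun i hi => h i (Finset.mem_insert_of_mem hi))

lemma isUnit_sub_of_rrad {g a : R} (hg : IsUnit g) (h : RRad a) : IsUnit (g - a) := by
  obtain ⟨u, hu⟩ := hg
  set i : R := ↑u⁻¹ with hi
  have hui : g * i = 1 := by rw [← hu]; exact u.mul_inv
  have key' : g * (1 - i * a) = g - a :=
    calc g * (1 - i * a) = g - (g * i) * a := by noncomm_ring
      _ = g - a := by rw [hui, one_mul]
  rw [← key']
  exact (show IsUnit g from ⟨u, hu⟩).mul (h i)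

end RingRad

/-! ### Finite-monoid and local-endomorphism lemmas -/

lemma fm {A : C} [Finite (A ⟶ A)] {x y : A ⟶ A} (h : x ≫ y = 𝟙 A) : y ≫ x = 𝟙 A := by
  have hsurj : Function.Surjective (fun z : A ⟶ A => z ≫ y) := fun z => ⟨z ≫ x, by
    simp only [assoc, h, comp_id]⟩
  apply (Finite.injective_iff_surjective).2 hsurj
  show (y ≫ x) ≫ y = 𝟙 A ≫ y
  rw [assoc, h, comp_id, id_comp]

lemma isIso_of_section {A : C} [Finite (A ⟶ A)] {x y : A ⟶ A} (h : x ≫ y = 𝟙 A) : IsIso x :=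
  ⟨y, h, fm h⟩

section NU
variable {X : C}

lemma nu_zero (hnz : 𝟙 X ≠ 0) : ¬ IsIso (0 : X ⟶ X) := by
  intro h
  exact hnz (by rw [← IsIso.hom_inv_id (0 : X ⟶ X), zero_comp])

lemma nu_add (hloc : ∀ e : X ⟶ X, IsIso e ∨ IsIso (𝟙 X - e))
    {x y : X ⟶ X} (hx : ¬ IsIso x) (hy : ¬ IsIso y) : ¬ IsIso (x + y) := by
  intro h
  have he : inv (x + y) ≫ x + inv (x + y) ≫ y = 𝟙 X := by
    rw [← Preadditive.comp_add, IsIso.inv_hom_id]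
  rcases hloc (inv (x + y) ≫ x) with h' | h'
  · exact hx (by rw [show x = (x + y) ≫ (inv (x + y) ≫ x) by
      rw [← assoc, IsIso.hom_inv_id, id_comp]]; infer_instance)
  · rw [show 𝟙 X - inv (x + y) ≫ x = inv (x + y) ≫ y by rw [← he]; abel] at h'
    exact hy (by rw [show y = (x + y) ≫ (inv (x + y) ≫ y) by
      rw [← assoc, IsIso.hom_inv_id, id_comp]]; infer_instance)

lemma nu_neg {x : X ⟶ X} (hx : ¬ IsIso x) : ¬ IsIso (-x) := by
  intro h
  apply hx
  have : IsIso (-(𝟙 X)) := ⟨-(𝟙 X), by simp, by simp⟩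
  rw [show x = (-x) ≫ (-(𝟙 X)) by simp]
  infer_instance

lemma nu_sum (hnz : 𝟙 X ≠ 0) (hloc : ∀ e : X ⟶ X, IsIso e ∨ IsIso (𝟙 X - e))
    {ι : Type*} (s : Finset ι) (g : ι → (X ⟶ X)) (h : ∀ i ∈ s, ¬ IsIso (g i)) :
    ¬ IsIso (∑ i ∈ s, g i) := by
  classical
  induction s using Finset.induction_on with
  | empty => simpa using nu_zero hnz
  | @insert a s hx ih =>
    rw [Finset.sum_insert hx]
    exact nu_add hloc (h _ (Finset.mem_insert_self _ _))
      (ih fun i hi => h i (Finset.mem_insert_of_mem hi))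

end NU

/-! ### The radical predicate on endomorphisms of an object -/

def CRad {A : C} (a : A ⟶ A) : Prop := ∀ b : A ⟶ A, IsIso (𝟙 A - a ≫ b)

lemma crad_iff {A : C} (a : A ⟶ A) : CRad a ↔ RRad (R := End A) a := by
  constructor
  · intro h b
    rw [CategoryTheory.isUnit_iff_isIso]
    exact h b
  · intro h b
    have := h b
    rw [CategoryTheory.isUnit_iff_isIso] at this
    exact this

lemma isIso_sub_of_crad {A : C} {g a : A ⟶ A} (hg : IsIso g) (h : CRad a) : IsIso (g - a) := by
  have := isUnit_sub_of_rrad (R := End A) (g := g) (a := a)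
    ((CategoryTheory.isUnit_iff_isIso (g : End A)).mpr hg) ((crad_iff a).mp h)
  rw [CategoryTheory.isUnit_iff_isIso] at this
  exact this

lemma crad_sum {A : C} {ι : Type*} (s : Finset ι) (g : ι → (A ⟶ A))
    (h : ∀ i ∈ s, CRad (g i)) : CRad (∑ i ∈ s, g i) := by
  rw [crad_iff]
  exact rrad_sum (R := End A) s g (fun i hi => (crad_iff (g i)).mp (h i hi))

lemma crad_one_sub {A : C} {a : A ⟶ A} (h : CRad a) : IsIso (𝟙 A - a) := by
  simpa using h (𝟙 A)

/-! ### The master invertibility criterion for morphisms of biproducts -/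

lemma master : ∀ (t : ℕ) (Y : Fin t → C) (ρ : ∀ i j, Set (Y i ⟶ Y j))
    (_ : ∀ i j, ∀ x y : Y i ⟶ Y j, x ∈ ρ i j → y ∈ ρ i j → x - y ∈ ρ i j)
    (_ : ∀ i j l, i ≠ j → j ≠ l → i ≠ l → ∀ x ∈ ρ i j, ∀ h : Y j ⟶ Y j, ∀ y ∈ ρ j l,
       x ≫ h ≫ y ∈ ρ i l)
    (_ : ∀ i j, i ≠ j → ∀ x ∈ ρ i j, ∀ h : Y j ⟶ Y j, ∀ y ∈ ρ j i, CRad (x ≫ h ≫ y))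
    (f : ⨁ Y ⟶ ⨁ Y)
    (_ : ∀ i, IsIso (biproduct.ι Y i ≫ f ≫ biproduct.π Y i))
    (_ : ∀ i j, i ≠ j → biproduct.ι Y i ≫ f ≫ biproduct.π Y j ∈ ρ i j), IsIso f := by
  intro t
  induction t with
  | zero =>
    intro Y ρ _ _ _ f _ _
    have h0 : 𝟙 (⨁ Y) = 0 := biproduct.hom_ext _ _ (fun j => j.elim0)
    exact ⟨0, by rw [comp_zero, h0], by rw [zero_comp, h0]⟩
  | succ t IH =>
    intro Y ρ hsub hc1 hc2 f hdiag hoff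
    set Y' : Fin t → C := fun i => Y i.succ with hY'
    set σh : ⨁ Y ⟶ Y 0 ⊞ ⨁ Y' :=
      biprod.lift (biproduct.π Y 0) (biproduct.lift fun i => biproduct.π Y i.succ) with hσh
    set σi : Y 0 ⊞ ⨁ Y' ⟶ ⨁ Y :=
      biprod.desc (biproduct.ι Y 0) (biproduct.desc fun i => biproduct.ι Y i.succ) with hσi
    have hσ1 : σh ≫ σi = 𝟙 (⨁ Y) := by
      rw [hσh, hσi, biprod.lift_desc, biproduct.lift_desc, ← biproduct.total,
        Fin.sum_univ_succ]
    have hσ2 : σi ≫ σh = 𝟙 (Y 0 ⊞ ⨁ Y') := by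
      ext
      · simp [hσh, hσi]
      · simp [hσh, hσi, biproduct.ι_π, (Fin.succ_ne_zero _).symm]
      · simp [hσh, hσi, biproduct.ι_π, Fin.succ_ne_zero]
      · simp [hσh, hσi, biproduct.ι_π, Fin.succ_inj]
    set F : Y 0 ⊞ ⨁ Y' ⟶ Y 0 ⊞ ⨁ Y' := σi ≫ f ≫ σh with hF
    set a : Y 0 ⟶ Y 0 := biprod.inl ≫ F ≫ biprod.fst with ha0
    set b : Y 0 ⟶ ⨁ Y' := biprod.inl ≫ F ≫ biprod.snd with hb0
    set c : ⨁ Y' ⟶ Y 0 := biprod.inr ≫ F ≫ biprod.fst with hc0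
    set d : ⨁ Y' ⟶ ⨁ Y' := biprod.inr ≫ F ≫ biprod.snd with hd0
    have ha : a = biproduct.ι Y 0 ≫ f ≫ biproduct.π Y 0 := by
      simp [ha0, hF, hσh, hσi]
    have hb : ∀ j, b ≫ biproduct.π Y' j = biproduct.ι Y 0 ≫ f ≫ biproduct.π Y j.succ := by
      intro j; simp [hb0, hF, hσh, hσi]
    have hc : ∀ i, biproduct.ι Y' i ≫ c = biproduct.ι Y i.succ ≫ f ≫ biproduct.π Y 0 := by
      intro i; simp [hc0, hF, hσh, hσi]
    have hd : ∀ i j, biproduct.ι Y' i ≫ d ≫ biproduct.π Y' j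
        = biproduct.ι Y i.succ ≫ f ≫ biproduct.π Y j.succ := by
      intro i j; simp [hd0, hF, hσh, hσi]
    haveI hIa : IsIso a := by rw [ha]; exact hdiag 0
    set g : ⨁ Y' ⟶ ⨁ Y' := d - c ≫ inv a ≫ b with hg0
    have hgcomp : ∀ i j, biproduct.ι Y' i ≫ g ≫ biproduct.π Y' j
        = (biproduct.ι Y i.succ ≫ f ≫ biproduct.π Y j.succ)
          - (biproduct.ι Y i.succ ≫ f ≫ biproduct.π Y 0) ≫ inv a
              ≫ (biproduct.ι Y 0 ≫ f ≫ biproduct.π Y j.succ) := by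
      intro i j
      rw [hg0]
      simp only [Preadditive.sub_comp, Preadditive.comp_sub, assoc, hd]
      congr 1
      rw [← assoc, ← assoc, ← assoc]
      rw [show biproduct.ι Y' i ≫ c = biproduct.ι Y i.succ ≫ f ≫ biproduct.π Y 0 from hc i]
      simp only [assoc, hb]
    haveI hIg : IsIso g := by
      apply IH Y' (fun i j => ρ i.succ j.succ)
      · intro i j x y hx hy; exact hsub _ _ x y hx hy
      · intro i j l hij hjl hil x hx h y hy
        exact hc1 _ _ _ (fun e => hij (Fin.succ_inj.mp e)) (fun e => hjl (Fin.succ_inj.mp e))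
          (fun e => hil (Fin.succ_inj.mp e)) x hx h y hy
      · intro i j hij x hx h y hy
        exact hc2 _ _ (fun e => hij (Fin.succ_inj.mp e)) x hx h y hy
      · intro i
        rw [hgcomp i i]
        exact isIso_sub_of_crad (hdiag i.succ)
          (hc2 i.succ 0 (Fin.succ_ne_zero i) _ (hoff _ _ (Fin.succ_ne_zero i)) (inv a) _
            (hoff 0 _ (Fin.succ_ne_zero i).symm))
      · intro i j hij
        rw [hgcomp i j]
        refine hsub _ _ _ _ (hoff _ _ (fun e => hij (Fin.succ_inj.mp e))) ?_
        exact hc1 i.succ 0 j.succ (Fin.succ_ne_zero i) (Fin.succ_ne_zero j).symm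
          (fun e => hij (Fin.succ_inj.mp e)) _ (hoff _ _ (Fin.succ_ne_zero i)) (inv a) _
          (hoff 0 _ (Fin.succ_ne_zero j).symm)
    have hFcomp : F = Biprod.ofComponents a b c d := (Biprod.ofComponents_eq F).symm
    have w : (Biprod.unipotentLower (-(c ≫ inv a))).hom ≫ F
        ≫ (Biprod.unipotentUpper (-(inv a ≫ b))).hom = biprod.map a g := by
      rw [hFcomp, hg0]
      ext <;> simp <;> abel
    haveI : IsIso (biprod.map a g) := (biprod.mapIso (asIso a) (asIso g)).isIso_hom
    haveI : IsIso F := by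
      have hFe : F = (Biprod.unipotentLower (-(c ≫ inv a))).inv
          ≫ ((Biprod.unipotentLower (-(c ≫ inv a))).hom ≫ F
            ≫ (Biprod.unipotentUpper (-(inv a ≫ b))).hom)
          ≫ (Biprod.unipotentUpper (-(inv a ≫ b))).inv := by
        simp only [assoc, Iso.hom_inv_id, comp_id, Iso.inv_hom_id_assoc]
      rw [hFe, w]
      infer_instance
    have : f = σh ≫ F ≫ σi := by
      rw [hF]
      rw [show σh ≫ (σi ≫ f ≫ σh) ≫ σi = (σh ≫ σi) ≫ f ≫ (σh ≫ σi) by simp only [assoc]]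
      rw [hσ1]; simp
    rw [this]
    haveI : IsIso σh := ⟨σi, hσ1, hσ2⟩
    haveI : IsIso σi := ⟨σh, hσ2, hσ1⟩
    infer_instance

/-! ### Morphisms between nonisomorphic indecomposables compose to nonunits -/

lemma nu_cross {P Q : C} (hP : ¬ Limits.IsZero P)
    (hQind : ∀ e : Q ⟶ Q, e ≫ e = e → e = 0 ∨ e = 𝟙 Q)
    (hnoiso : IsEmpty (P ≅ Q)) (s : P ⟶ Q) (r : Q ⟶ P) : ¬ IsIso (s ≫ r) := by
  intro hc
  have key : ∀ {Z : C} (w : P ⟶ Z), s ≫ r ≫ w = (s ≫ r) ≫ w := by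
    intro Z w; rw [assoc]
  have hpp : (r ≫ inv (s ≫ r) ≫ s) ≫ (r ≫ inv (s ≫ r) ≫ s) = r ≫ inv (s ≫ r) ≫ s := by
    simp only [assoc]
    rw [key, IsIso.inv_hom_id_assoc]
  rcases hQind _ hpp with h0 | h1
  · apply hP
    rw [IsZero.iff_id_eq_zero]
    have : 𝟙 P = inv (s ≫ r) ≫ s ≫ (r ≫ inv (s ≫ r) ≫ s) ≫ r := by
      simp only [assoc]
      rw [key, IsIso.hom_inv_id_assoc, IsIso.inv_hom_id]
    rw [this, h0]
    simp
  · exact hnoiso.false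
      ⟨s, r ≫ inv (s ≫ r), by rw [key, IsIso.hom_inv_id], by rw [assoc]; exact h1⟩

lemma entry_nu {P Q : C} (np nq : ℕ) (u : (⨁ fun _ : Fin np => P) ⟶ (⨁ fun _ : Fin nq => Q))
    (w : (⨁ fun _ : Fin nq => Q) ⟶ (⨁ fun _ : Fin np => P))
    (hP : ¬ Limits.IsZero P)
    (hloc : ∀ e : P ⟶ P, IsIso e ∨ IsIso (𝟙 P - e))
    (hQind : ∀ e : Q ⟶ Q, e ≫ e = e → e = 0 ∨ e = 𝟙 Q)
    (hnoiso : IsEmpty (P ≅ Q)) (a b : Fin np) :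
    ¬ IsIso (biproduct.ι (fun _ : Fin np => P) a ≫ u ≫ w ≫ biproduct.π (fun _ : Fin np => P) b) := by
  have hnz : 𝟙 P ≠ 0 := fun h => hP ((IsZero.iff_id_eq_zero P).mpr h)
  have expand : biproduct.ι (fun _ : Fin np => P) a ≫ u ≫ w ≫ biproduct.π (fun _ : Fin np => P) b
      = ∑ c : Fin nq, (biproduct.ι (fun _ : Fin np => P) a ≫ u ≫ biproduct.π (fun _ : Fin nq => Q) c)
          ≫ (biproduct.ι (fun _ : Fin nq => Q) c ≫ w ≫ biproduct.π (fun _ : Fin np => P) b) := by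
    conv_lhs => rw [← Category.id_comp w, ← biproduct.total]
    simp only [Preadditive.sum_comp, Preadditive.comp_sum, assoc]
  rw [expand]
  apply nu_sum hnz hloc
  intro c _
  exact nu_cross hP hQind hnoiso
    (biproduct.ι (fun _ : Fin np => P) a ≫ u ≫ biproduct.π (fun _ : Fin nq => Q) c)
    (biproduct.ι (fun _ : Fin nq => Q) c ≫ w ≫ biproduct.π (fun _ : Fin np => P) b)

/-! ### The key invertibility criterion -/

section Main
variable {t : ℕ} (Xi : Fin t → C) (n : Fin t → ℕ)
  [∀ A B : C, Finite (A ⟶ B)]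
  (hind : ∀ i, Indec (Xi i))
  (hlocal : ∀ i, ∀ e : Xi i ⟶ Xi i, IsIso e ∨ IsIso (𝟙 (Xi i) - e))
  (hpair : ∀ i j, i ≠ j → IsEmpty (Xi i ≅ Xi j))

include hind hlocal hpair in
lemma iso_one_sub_through {i j : Fin t} (hij : i ≠ j)
    (u : (⨁ fun _ : Fin (n i) => Xi i) ⟶ (⨁ fun _ : Fin (n j) => Xi j))
    (w : (⨁ fun _ : Fin (n j) => Xi j) ⟶ (⨁ fun _ : Fin (n i) => Xi i)) :
    IsIso (𝟙 (⨁ fun _ : Fin (n i) => Xi i) - u ≫ w) := by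
  have hnz : 𝟙 (Xi i) ≠ 0 := fun h => (hind i).1 ((IsZero.iff_id_eq_zero _).mpr h)
  apply master (n i) (fun _ => Xi i) (fun _ _ => {x | ¬ IsIso x})
  · intro a b x y hx hy
    rw [sub_eq_add_neg]
    exact nu_add (hlocal i) hx (nu_neg hy)
  · intro a b l _ _ _ x hx h y hy
    intro hiso
    apply hx
    apply isIso_of_section (y := (h ≫ y) ≫ inv (x ≫ h ≫ y))
    simpa only [assoc] using IsIso.hom_inv_id (x ≫ h ≫ y)
  · intro a b _ x hx h y hy
    intro z
    rw [show (x ≫ h ≫ y) ≫ z = x ≫ h ≫ (y ≫ z) by simp only [assoc]]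
    have hnu : ¬ IsIso (x ≫ h ≫ (y ≫ z)) := by
      intro hiso
      apply hx
      apply isIso_of_section (y := (h ≫ (y ≫ z)) ≫ inv (x ≫ h ≫ (y ≫ z)))
      simpa only [assoc] using IsIso.hom_inv_id (x ≫ h ≫ (y ≫ z))
    rcases hlocal i (x ≫ h ≫ (y ≫ z)) with h' | h'
    · exact absurd h' hnu
    · exact h'
  · intro a
    have hcomp : biproduct.ι (fun _ : Fin (n i) => Xi i) a
        ≫ (𝟙 (⨁ fun _ : Fin (n i) => Xi i) - u ≫ w)
        ≫ biproduct.π (fun _ : Fin (n i) => Xi i) a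
        = 𝟙 (Xi i) - biproduct.ι (fun _ : Fin (n i) => Xi i) a ≫ u ≫ w
            ≫ biproduct.π (fun _ : Fin (n i) => Xi i) a := by
      simp [Preadditive.comp_sub, Preadditive.sub_comp]
    rw [hcomp]
    rcases hlocal i (biproduct.ι (fun _ : Fin (n i) => Xi i) a ≫ u ≫ w
        ≫ biproduct.π (fun _ : Fin (n i) => Xi i) a) with h' | h'
    · exact absurd h' (entry_nu (n i) (n j) u w (hind i).1 (hlocal i) (hind j).2 (hpair i j hij) a a)
    · exact h'
  · intro a b hab
    have hcomp : biproduct.ι (fun _ : Fin (n i) => Xi i) a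
        ≫ (𝟙 (⨁ fun _ : Fin (n i) => Xi i) - u ≫ w)
        ≫ biproduct.π (fun _ : Fin (n i) => Xi i) b
        = - (biproduct.ι (fun _ : Fin (n i) => Xi i) a ≫ u ≫ w
            ≫ biproduct.π (fun _ : Fin (n i) => Xi i) b) := by
      simp [Preadditive.comp_sub, Preadditive.sub_comp, biproduct.ι_π_ne _ hab]
    rw [hcomp]
    exact nu_neg (entry_nu (n i) (n j) u w (hind i).1 (hlocal i) (hind j).2 (hpair i j hij) a b)

local notation "Yf" => (fun i : Fin t => (⨁ fun _ : Fin (n i) => Xi i))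

include hind hlocal hpair in
lemma dirB (f : (⨁ Yf) ⟶ (⨁ Yf))
    (hdiag : ∀ i, IsIso (biproduct.ι Yf i ≫ f ≫ biproduct.π Yf i)) : IsIso f := by
  apply master t Yf (fun _ _ => Set.univ)
  · intro _ _ _ _ _ _; trivial
  · intro _ _ _ _ _ _ _ _ _ _ _; trivial
  · intro i j hij x _ h y _
    intro z
    rw [show (x ≫ h ≫ y) ≫ z = (x ≫ h) ≫ (y ≫ z) by simp only [assoc]]
    exact iso_one_sub_through Xi n hind hlocal hpair hij (x ≫ h) (y ≫ z)
  · exact hdiag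
  · intro _ _ _; trivial

include hind hlocal hpair in
lemma dirA (f : (⨁ Yf) ⟶ (⨁ Yf)) [IsIso f] (i : Fin t) :
    IsIso (biproduct.ι Yf i ≫ f ≫ biproduct.π Yf i) := by
  classical
  have e0 : 𝟙 (Yf i) = ∑ j : Fin t,
      (biproduct.ι Yf i ≫ f ≫ biproduct.π Yf j) ≫ (biproduct.ι Yf j ≫ inv f ≫ biproduct.π Yf i) := by
    have e1 : 𝟙 (Yf i) = biproduct.ι Yf i ≫ f ≫ (𝟙 (⨁ Yf)) ≫ inv f ≫ biproduct.π Yf i := by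
      simp
    rw [e1, ← biproduct.total]
    simp only [Preadditive.sum_comp, Preadditive.comp_sum, assoc]
  set r : (Yf i) ⟶ (Yf i) := ∑ j ∈ Finset.univ.erase i,
      (biproduct.ι Yf i ≫ f ≫ biproduct.π Yf j) ≫ (biproduct.ι Yf j ≫ inv f ≫ biproduct.π Yf i)
    with hr
  have e2 : (biproduct.ι Yf i ≫ f ≫ biproduct.π Yf i) ≫ (biproduct.ι Yf i ≫ inv f ≫ biproduct.π Yf i)
      = 𝟙 (Yf i) - r := by
    rw [e0, hr, ← Finset.add_sum_erase _ _ (Finset.mem_univ i)]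
    abel
  have hrad : CRad r := by
    rw [hr]
    apply crad_sum
    intro j hj
    have hij : i ≠ j := fun e => (Finset.ne_of_mem_erase hj) e.symm
    intro z
    rw [show ((biproduct.ι Yf i ≫ f ≫ biproduct.π Yf j) ≫ (biproduct.ι Yf j ≫ inv f ≫ biproduct.π Yf i)) ≫ z
      = (biproduct.ι Yf i ≫ f ≫ biproduct.π Yf j) ≫ ((biproduct.ι Yf j ≫ inv f ≫ biproduct.π Yf i) ≫ z)
      by simp only [assoc]]
    exact iso_one_sub_through Xi n hind hlocal hpair hij _ _
  haveI : IsIso (𝟙 (Yf i) - r) := crad_one_sub hrad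
  apply isIso_of_section
    (y := (biproduct.ι Yf i ≫ inv f ≫ biproduct.π Yf i) ≫ inv (𝟙 (Yf i) - r))
  rw [← assoc, e2, IsIso.hom_inv_id]

end Main

/-! ### Counting automorphisms of a biproduct -/

/-- Transport of automorphism groups along an isomorphism. -/
noncomputable def autEquivOfIso {A B : C} (e : A ≅ B) : Aut A ≃ Aut B where
  toFun g := e.symm ≪≫ g ≪≫ e
  invFun g := e ≪≫ g ≪≫ e.symm
  left_inv g := by ext; simp; exact (Category.assoc _ _ _).trans (by simp)
  right_inv g := by ext; simp; exact (Category.assoc _ _ _).trans (by simp)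

noncomputable def isoSubEquivAut (A : C) : {g : A ⟶ A // IsIso g} ≃ Aut A where
  toFun g := @asIso _ _ _ _ g.1 g.2
  invFun α := ⟨α.hom, α.isIso_hom⟩
  left_inv g := rfl
  right_inv α := by ext; rfl

section Count
variable [∀ A B : C, Finite (A ⟶ B)] {t : ℕ} (Yf : Fin t → C)

include Yf in
lemma count_aut
    (hcrit : ∀ f : (⨁ Yf) ⟶ (⨁ Yf),
      IsIso f ↔ ∀ i, IsIso (biproduct.ι Yf i ≫ f ≫ biproduct.π Yf i)) :
    Nat.card (Aut (⨁ Yf)) =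
      (∏ i, ∏ j, if i ≠ j then Nat.card (Yf i ⟶ Yf j) else 1) *
        ∏ i, Nat.card (Aut (Yf i)) := by
  classical
  have eq1 : Aut (⨁ Yf) ≃ {f : (⨁ Yf) ⟶ (⨁ Yf) //
      ∀ i, IsIso (biproduct.ι Yf i ≫ f ≫ biproduct.π Yf i)} :=
    { toFun := fun α => ⟨α.hom, (hcrit α.hom).mp α.isIso_hom⟩
      invFun := fun f => haveI := (hcrit f.1).mpr f.2; asIso f.1
      left_inv := fun α => by ext; rfl
      right_inv := fun f => rfl }
  have hmap1 : ∀ (g : ∀ i, Yf i ⟶ Yf i) (i : Fin t),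
      biproduct.ι Yf i ≫ biproduct.map g ≫ biproduct.π Yf i = g i := by
    intro g i; simp
  have eq2 : {f : (⨁ Yf) ⟶ (⨁ Yf) //
        ∀ i, IsIso (biproduct.ι Yf i ≫ f ≫ biproduct.π Yf i)} ≃
      (∀ i, {g : Yf i ⟶ Yf i // IsIso g}) ×
        {f : (⨁ Yf) ⟶ (⨁ Yf) // ∀ i, biproduct.ι Yf i ≫ f ≫ biproduct.π Yf i = 0} :=
    { toFun := fun f =>
        ⟨fun i => ⟨biproduct.ι Yf i ≫ f.1 ≫ biproduct.π Yf i, f.2 i⟩,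
         ⟨f.1 - biproduct.map (fun i => biproduct.ι Yf i ≫ f.1 ≫ biproduct.π Yf i), by
            intro i
            simp only [Preadditive.sub_comp, Preadditive.comp_sub, hmap1]
            exact sub_self _⟩⟩
      invFun := fun p =>
        ⟨biproduct.map (fun i => (p.1 i).1) + p.2.1, by
          intro i
          simp only [Preadditive.add_comp, Preadditive.comp_add, hmap1]
          rw [p.2.2 i, add_zero]
          exact (p.1 i).2⟩
      left_inv := fun f => by
        apply Subtype.ext
        simp only []
        abel
      right_inv := fun p => by
        have hcm : ∀ i, biproduct.ι Yf i ≫ (biproduct.map (fun i => (p.1 i).1) + p.2.1)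
            ≫ biproduct.π Yf i = (p.1 i).1 := by
          intro i
          simp only [Preadditive.add_comp, Preadditive.comp_add, hmap1]
          rw [p.2.2 i, add_zero]
        refine Prod.ext ?_ ?_
        · funext i
          exact Subtype.ext (hcm i)
        · apply Subtype.ext
          simp only []
          rw [show (fun i => biproduct.ι Yf i ≫ (biproduct.map (fun i => (p.1 i).1) + p.2.1)
            ≫ biproduct.π Yf i) = fun i => (p.1 i).1 from funext hcm]
          abel }
  have eq4 : {f : (⨁ Yf) ⟶ (⨁ Yf) // ∀ i, biproduct.ι Yf i ≫ f ≫ biproduct.π Yf i = 0} ≃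
      ∀ i j, {x : Yf i ⟶ Yf j // i = j → x = 0} :=
    { toFun := fun f i j => ⟨biproduct.ι Yf i ≫ f.1 ≫ biproduct.π Yf j, by
        rintro rfl; exact f.2 i⟩
      invFun := fun N => ⟨biproduct.matrix (fun i j => (N i j).1), by
        intro i
        rw [show biproduct.ι Yf i ≫ biproduct.matrix (fun i j => (N i j).1) ≫ biproduct.π Yf i
          = (N i i).1 by simp [biproduct.ι_matrix]]
        exact (N i i).2 rfl⟩
      left_inv := fun f => Subtype.ext (biproduct.components_matrix f.1)
      right_inv := fun N => by
        funext i j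
        exact Subtype.ext (by simp [biproduct.ι_matrix, biproduct.components]) }
  rw [Nat.card_congr (eq1.trans (eq2.trans (Equiv.prodCongr
    (Equiv.piCongrRight (fun i => isoSubEquivAut (Yf i))) eq4)))]
  rw [Nat.card_prod, Nat.card_pi, Nat.card_pi, mul_comm]
  congr 1
  · apply Finset.prod_congr rfl
    intro i _
    rw [Nat.card_pi]
    apply Finset.prod_congr rfl
    intro j _
    by_cases h : i = j
    · subst h
      rw [if_neg (by simp), Nat.card_eq_one_iff_unique]
      exact ⟨⟨fun x y => Subtype.ext (by rw [x.2 rfl, y.2 rfl])⟩, ⟨⟨0, fun _ => rfl⟩⟩⟩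
    · rw [if_pos h]
      exact Nat.card_congr (Equiv.subtypeUnivEquiv (fun x e => absurd e h))

end Count

/-! ### The main theorem -/

theorem stmt14 (k : Type*) [Field k] [Fintype k] [Linear k C]
    [∀ A B : C, Finite (A ⟶ B)] [∀ A B : C, Module.Finite k (A ⟶ B)]
    (q : ℕ) (hq : Fintype.card k = q)
    (t : ℕ) (Xi : Fin t → C) (n : Fin t → ℕ)
    (hind : ∀ i, Indec (Xi i))
    (hlocal : ∀ i, ∀ e : Xi i ⟶ Xi i, IsIso e ∨ IsIso (𝟙 (Xi i) - e))
    (hpair : ∀ i j, i ≠ j → IsEmpty (Xi i ≅ Xi j))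
    (X : C) (hX : Nonempty (X ≅ ⨁ fun i => ⨁ fun _ : Fin (n i) => Xi i)) :
    Nat.card (Aut X) =
      q ^ (∑ i : Fin t, ∑ j : Fin t,
            if i ≠ j then
              Module.finrank k
                ((⨁ fun _ : Fin (n i) => Xi i) ⟶ (⨁ fun _ : Fin (n j) => Xi j))
            else 0) *
        ∏ i : Fin t, Nat.card (Aut (⨁ fun _ : Fin (n i) => Xi i)) := by
  classical
  obtain ⟨e⟩ := hX
  rw [Nat.card_congr (autEquivOfIso e)]
  rw [count_aut (fun i : Fin t => (⨁ fun _ : Fin (n i) => Xi i))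
    (fun f => ⟨fun h => by haveI := h; exact fun i => dirA Xi n hind hlocal hpair f i,
               fun h => dirB Xi n hind hlocal hpair f h⟩)]
  congr 1
  calc ∏ i, ∏ j, (if i ≠ j then
          Nat.card ((⨁ fun _ : Fin (n i) => Xi i) ⟶ (⨁ fun _ : Fin (n j) => Xi j)) else 1)
      = ∏ i, ∏ j, q ^ (if i ≠ j then
          Module.finrank k ((⨁ fun _ : Fin (n i) => Xi i) ⟶ (⨁ fun _ : Fin (n j) => Xi j))
          else 0) := by
        apply Finset.prod_congr rfl
        intro i _
        apply Finset.prod_congr rfl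
        intro j _
        by_cases h : i ≠ j
        · rw [if_pos h, if_pos h]
          haveI : Fintype ((⨁ fun _ : Fin (n i) => Xi i) ⟶ (⨁ fun _ : Fin (n j) => Xi j)) :=
            Fintype.ofFinite _
          rw [Nat.card_eq_fintype_card, Module.card_eq_pow_finrank (K := k), hq]
        · rw [if_neg h, if_neg h, pow_zero]
    _ = q ^ (∑ i : Fin t, ∑ j : Fin t, if i ≠ j then
          Module.finrank k ((⨁ fun _ : Fin (n i) => Xi i) ⟶ (⨁ fun _ : Fin (n j) => Xi j))
          else 0) := by
        rw [← Finset.prod_pow_eq_pow_sum]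
        apply Finset.prod_congr rfl
        intro i _
        rw [← Finset.prod_pow_eq_pow_sum]
end
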